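/- Let α > 0 and β > 0, and suppose V* : S → ℝ minimizes the function V ↦ log Z_V over all V : S → ℝ. Then the distribution p*(s,a) = Z_{V*}^{-1} · (Σ_b exp(A_{V*}(s,b)/α))^{α/β − 1} · exp(A_{V*}(s,a)/α) belongs to the feasible set D, maximizes R_{α,β} over D, and satisfies R_{α,β}(p*) = β · log Z_{V*}. -/

import Mathlib

open Finset

/-- The average total reward `R_{α,β}(p)`, with the convention `0 · log 0 = 0`. -/
noncomputable def Ravg {S A : Type} [Fintype S] [Fintype A]
    (r : S → A → ℝ) (α β : ℝ) (p : S → A → ℝ) : ℝ :=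
  (∑ s, ∑ a, p s a * r s a)
    - α * ∑ s, ∑ a, p s a * Real.log (p s a)
    - (β - α) * ∑ s, ∑ a, p s a * Real.log (∑ b, p s b)

/-- The advantage `A_V(s,a) = r(s,a) + Σ_{s'} V(s') P(s'|s,a) − V(s)`,
where `P s a s'` denotes `P(s'|s,a)`. -/
noncomputable def Adv {S A : Type} [Fintype S]
    (P : S → A → S → ℝ) (r : S → A → ℝ) (V : S → ℝ) (s : S) (a : A) : ℝ :=
  r s a + (∑ s', V s' * P s a s') - V s

/-- The partition function `Z_V = Σ_s (Σ_a exp(A_V(s,a)/α))^{α/β}`. -/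
noncomputable def Zfun {S A : Type} [Fintype S] [Fintype A]
    (P : S → A → S → ℝ) (r : S → A → ℝ) (α β : ℝ) (V : S → ℝ) : ℝ :=
  ∑ s, (∑ a, Real.exp (Adv P r V s a / α)) ^ (α / β)

lemma klAux {x y : ℝ} (hx : 0 ≤ x) (hy : 0 < y) :
    x - y ≤ x * Real.log x - x * Real.log y := by
  rcases eq_or_lt_of_le hx with h|h
  · simp [← h]; linarith
  · have h1 : Real.log (y / x) ≤ y / x - 1 := Real.log_le_sub_one_of_pos (div_pos hy h)
    rw [Real.log_div hy.ne' h.ne'] at h1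
    have h2 : x * (Real.log y - Real.log x) ≤ x * (y / x - 1) :=
      mul_le_mul_of_nonneg_left h1 h.le
    have h3 : x * (y / x - 1) = y - x := by field_simp
    nlinarith

lemma Zpos {S A : Type} [Fintype S] [Fintype A] [Nonempty S] [Nonempty A]
    (P : S → A → S → ℝ) (r : S → A → ℝ) (α β : ℝ) (V : S → ℝ) :
    0 < Zfun P r α β V :=
  Finset.sum_pos (fun _ _ => Real.rpow_pos_of_pos
    (Finset.sum_pos (fun _ _ => Real.exp_pos _) Finset.univ_nonempty) _) Finset.univ_nonempty

theorem optimal_from_dual_minimizer {S A : Type} [Fintype S] [Fintype A]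
    [Nonempty S] [Nonempty A]
    (P : S → A → S → ℝ) (hP0 : ∀ s a s', 0 ≤ P s a s')
    (hP1 : ∀ s a, (∑ s', P s a s') = 1)
    (r : S → A → ℝ) (α β : ℝ) (hα : 0 < α) (hβ : 0 < β)
    (Vstar : S → ℝ)
    (hmin : ∀ V : S → ℝ,
      Real.log (Zfun P r α β Vstar) ≤ Real.log (Zfun P r α β V))
    (pstar : S → A → ℝ)
    (hpstar : ∀ s a, pstar s a =
      (Zfun P r α β Vstar)⁻¹ *
        (∑ b, Real.exp (Adv P r Vstar s b / α)) ^ (α / β - 1) *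
        Real.exp (Adv P r Vstar s a / α)) :
    ((∀ s a, 0 ≤ pstar s a) ∧ (∑ s, ∑ a, pstar s a) = 1 ∧
        (∀ s' : S, (∑ s, ∑ a, P s a s' * pstar s a) = ∑ b, pstar s' b)) ∧
      (∀ q : S → A → ℝ,
        ((∀ s a, 0 ≤ q s a) ∧ (∑ s, ∑ a, q s a) = 1 ∧
          (∀ s' : S, (∑ s, ∑ a, P s a s' * q s a) = ∑ b, q s' b)) →
        Ravg r α β q ≤ Ravg r α β pstar) ∧
      Ravg r α β pstar = β * Real.log (Zfun P r α β Vstar) := by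
  classical
  set Z : ℝ := Zfun P r α β Vstar with hZdef
  have hZpos : 0 < Z := Zpos P r α β Vstar
  set w : S → ℝ := fun s => ∑ b, Real.exp (Adv P r Vstar s b / α) with hwdef
  have hwpos : ∀ s, 0 < w s := fun s =>
    Finset.sum_pos (fun _ _ => Real.exp_pos _) Finset.univ_nonempty
  have hps : ∀ s a, pstar s a =
      Z⁻¹ * w s ^ (α / β - 1) * Real.exp (Adv P r Vstar s a / α) := by
    intro s a; rw [hpstar]
  have hupos : ∀ s a, 0 < pstar s a := fun s a => by
    rw [hps]
    exact mul_pos (mul_pos (inv_pos.mpr hZpos) (Real.rpow_pos_of_pos (hwpos s) _))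
      (Real.exp_pos _)
  have hmarg : ∀ s, (∑ b, pstar s b) = Z⁻¹ * w s ^ (α / β) := by
    intro s
    have h1 : (∑ b, pstar s b) = Z⁻¹ * w s ^ (α / β - 1) * w s := by
      simp only [hps]
      rw [← Finset.mul_sum, hwdef]
    rw [h1, mul_assoc]
    congr 1
    rw [← Real.rpow_add_one (hwpos s).ne']
    norm_num
  have hZeq : (∑ s, w s ^ (α / β)) = Z := by
    rw [hZdef, Zfun]
  have hsum1 : (∑ s, ∑ a, pstar s a) = 1 := by
    simp only [hmarg]
    rw [← Finset.mul_sum, hZeq, inv_mul_cancel₀ hZpos.ne']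
  have hstat : ∀ s' : S, (∑ s, ∑ a, P s a s' * pstar s a) = ∑ b, pstar s' b := by
    intro s0
    set c : S → A → ℝ := fun s a => P s a s0 - (if s = s0 then 1 else 0) with hcdef
    have hAdvt : ∀ (t : ℝ) s a,
        Adv P r (fun u => Vstar u + t * (if u = s0 then 1 else 0)) s a
          = Adv P r Vstar s a + t * c s a := by
      intro t s a
      simp only [Adv, hcdef]
      have h1 : (∑ s', (Vstar s' + t * (if s' = s0 then 1 else 0)) * P s a s')
          = (∑ s', Vstar s' * P s a s') + t * P s a s0 := by
        rw [Finset.sum_congr rfl (fun s' (_ : s' ∈ Finset.univ) => add_mul (Vstar s')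
          (t * (if s' = s0 then 1 else 0)) (P s a s')), Finset.sum_add_distrib]
        congr 1
        have : ∀ s', t * (if s' = s0 then 1 else 0) * P s a s'
            = if s' = s0 then t * P s a s' else 0 := by
          intro s'; by_cases h : s' = s0 <;> simp [h]
        rw [Finset.sum_congr rfl fun s' _ => this s', Finset.sum_ite_eq' Finset.univ s0]
        simp
      rw [h1]
      ring
    set g : ℝ → ℝ := fun t =>
      ∑ s, (∑ a, Real.exp ((Adv P r Vstar s a + t * c s a) / α)) ^ (α / β) with hgdef
    have hg : ∀ t : ℝ,
        Zfun P r α β (fun u => Vstar u + t * (if u = s0 then 1 else 0)) = g t := by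
      intro t
      rw [Zfun, hgdef]
      exact Finset.sum_congr rfl fun s _ => by
        congr 1
        exact Finset.sum_congr rfl fun a _ => by rw [hAdvt t s a]
    have hg0 : g 0 = Z := by
      rw [hgdef, hZdef, Zfun]
      simp
    have hglow : ∀ t, g 0 ≤ g t := by
      intro t
      rw [hg0, ← hg t]
      have h := hmin (fun u => Vstar u + t * (if u = s0 then 1 else 0))
      have := Real.exp_le_exp.mpr h
      rwa [Real.exp_log hZpos, Real.exp_log (Zpos P r α β _)] at this
    have hderiv : HasDerivAt g
        (∑ s, (∑ a, Real.exp (Adv P r Vstar s a / α) * (c s a / α))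
          * (α / β) * w s ^ (α / β - 1)) 0 := by
      rw [hgdef]
      apply HasDerivAt.fun_sum
      intro s _
      have hin : ∀ a ∈ Finset.univ,
          HasDerivAt (fun t : ℝ => Real.exp ((Adv P r Vstar s a + t * c s a) / α))
            (Real.exp (Adv P r Vstar s a / α) * (c s a / α)) 0 := by
        intro a _
        have h1 : HasDerivAt (fun t : ℝ => (Adv P r Vstar s a + t * c s a) / α)
            (c s a / α) 0 := by
          have h2 : HasDerivAt (fun t : ℝ => Adv P r Vstar s a + t * c s a)
              (c s a) 0 := by
            simpa using ((hasDerivAt_id (0:ℝ)).mul_const (c s a)).const_add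
              (Adv P r Vstar s a)
          simpa using h2.div_const α
        have h3 := h1.exp
        simpa using h3
      have hsum := HasDerivAt.fun_sum hin
      have hf0 : (∑ a, Real.exp ((Adv P r Vstar s a + (0:ℝ) * c s a) / α)) = w s := by
        simp [hwdef]
      have h4 := hsum.rpow_const (p := α / β) (Or.inl (by rw [hf0]; exact (hwpos s).ne'))
      rw [hf0] at h4
      exact h4
    have hd0 : (∑ s, (∑ a, Real.exp (Adv P r Vstar s a / α) * (c s a / α))
        * (α / β) * w s ^ (α / β - 1)) = 0 := by
      have hloc : IsLocalMin g 0 := Filter.Eventually.of_forall hglow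
      exact hloc.hasDerivAt_eq_zero hderiv
    have key : (∑ s, ∑ a, c s a * pstar s a) = 0 := by
      have heq : (∑ s, ∑ a, c s a * pstar s a)
          = (Z⁻¹ * β) * ∑ s, (∑ a, Real.exp (Adv P r Vstar s a / α) * (c s a / α))
            * (α / β) * w s ^ (α / β - 1) := by
        rw [Finset.mul_sum]
        refine Finset.sum_congr rfl fun s _ => ?_
        rw [Finset.sum_mul, Finset.sum_mul, Finset.mul_sum]
        refine Finset.sum_congr rfl fun a _ => ?_
        rw [hps]
        field_simp
      rw [heq, hd0, mul_zero]
    have expand : (∑ s, ∑ a, c s a * pstar s a)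
        = (∑ s, ∑ a, P s a s0 * pstar s a) - ∑ b, pstar s0 b := by
      simp only [hcdef, sub_mul, Finset.sum_sub_distrib]
      congr 1
      have h5 : ∀ s a, (if s = s0 then (1:ℝ) else 0) * pstar s a
          = if s = s0 then pstar s a else 0 := by
        intro s a; by_cases h : s = s0 <;> simp [h]
      calc (∑ s, ∑ a, (if s = s0 then (1:ℝ) else 0) * pstar s a)
          = ∑ s, (if s = s0 then ∑ a, pstar s a else 0) := by
            refine Finset.sum_congr rfl fun s _ => ?_
            rw [Finset.sum_congr rfl fun a _ => h5 s a]
            by_cases h : s = s0 <;> simp [h]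
        _ = ∑ b, pstar s0 b := by
            rw [Finset.sum_ite_eq' Finset.univ s0]
            simp
    rw [expand] at key
    linarith
  have hAdvId : ∀ s a, Adv P r Vstar s a
      = α * Real.log (pstar s a) + (β - α) * Real.log (∑ b, pstar s b)
        + β * Real.log Z := by
    intro s a
    have hlogp : Real.log (pstar s a)
        = -Real.log Z + (α / β - 1) * Real.log (w s) + Adv P r Vstar s a / α := by
      rw [hps, Real.log_mul (by positivity) (Real.exp_pos _).ne',
        Real.log_mul (by positivity) (by positivity), Real.log_inv,
        Real.log_exp, Real.log_rpow (hwpos s)]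
    have hlogm : Real.log (∑ b, pstar s b)
        = -Real.log Z + (α / β) * Real.log (w s) := by
      rw [hmarg, Real.log_mul (by positivity) (by positivity), Real.log_inv,
        Real.log_rpow (hwpos s)]
    rw [hlogp, hlogm]
    field_simp
    ring
  have htel : ∀ q : S → A → ℝ,
      (∀ s' : S, (∑ s, ∑ a, P s a s' * q s a) = ∑ b, q s' b) →
      (∑ s, ∑ a, q s a * Adv P r Vstar s a) = ∑ s, ∑ a, q s a * r s a := by
    intro q hq
    have key : (∑ s, ∑ a, q s a * (∑ s', Vstar s' * P s a s'))
        = ∑ s, ∑ a, q s a * Vstar s := by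
      have l1 : ∀ s a, q s a * (∑ s', Vstar s' * P s a s')
          = ∑ s', Vstar s' * (P s a s' * q s a) := by
        intro s a; rw [Finset.mul_sum]; exact Finset.sum_congr rfl fun s' _ => by ring
      simp only [l1]
      have l2 : (∑ s, ∑ a, ∑ s', Vstar s' * (P s a s' * q s a))
          = ∑ s', ∑ s, ∑ a, Vstar s' * (P s a s' * q s a) := by
        calc (∑ s, ∑ a, ∑ s', Vstar s' * (P s a s' * q s a))
            = ∑ s, ∑ s', ∑ a, Vstar s' * (P s a s' * q s a) :=
              Finset.sum_congr rfl fun s _ => Finset.sum_comm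
          _ = ∑ s', ∑ s, ∑ a, Vstar s' * (P s a s' * q s a) := Finset.sum_comm
      rw [l2]
      have l3 : ∀ s', (∑ s, ∑ a, Vstar s' * (P s a s' * q s a))
          = Vstar s' * ∑ b, q s' b := by
        intro s'
        rw [← hq s', Finset.mul_sum]
        exact Finset.sum_congr rfl fun s _ => by rw [Finset.mul_sum]
      simp only [l3]
      exact Finset.sum_congr rfl fun s _ => by
        rw [Finset.mul_sum]; exact Finset.sum_congr rfl fun a _ => by ring
    calc ∑ s, ∑ a, q s a * Adv P r Vstar s a
        = ∑ s, ∑ a, (q s a * r s a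
            + (q s a * (∑ s', Vstar s' * P s a s') - q s a * Vstar s)) := by
          exact Finset.sum_congr rfl fun s _ => Finset.sum_congr rfl fun a _ => by
            rw [Adv]; ring
      _ = (∑ s, ∑ a, q s a * r s a)
            + ((∑ s, ∑ a, q s a * (∑ s', Vstar s' * P s a s'))
              - ∑ s, ∑ a, q s a * Vstar s) := by
          simp [Finset.sum_add_distrib, Finset.sum_sub_distrib]
      _ = ∑ s, ∑ a, q s a * r s a := by rw [key]; ring
  -- value formula for stationary distributions
  have hval : ∀ q : S → A → ℝ, (∀ s a, 0 ≤ q s a) → (∑ s, ∑ a, q s a) = 1 →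
      (∀ s' : S, (∑ s, ∑ a, P s a s' * q s a) = ∑ b, q s' b) →
      Ravg r α β q = β * Real.log Z
        - α * (∑ s, ∑ a, (q s a * Real.log (q s a) - q s a * Real.log (pstar s a)))
        - (β - α) * (∑ s, ∑ a,
            (q s a * Real.log (∑ b, q s b) - q s a * Real.log (∑ b, pstar s b))) := by
    intro q hq0 hq1 hqs
    have hA : (∑ s, ∑ a, q s a * Adv P r Vstar s a)
        = α * (∑ s, ∑ a, q s a * Real.log (pstar s a))
          + (β - α) * (∑ s, ∑ a, q s a * Real.log (∑ b, pstar s b))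
          + β * Real.log Z := by
      calc (∑ s, ∑ a, q s a * Adv P r Vstar s a)
          = ∑ s, ∑ a, (α * (q s a * Real.log (pstar s a))
              + (β - α) * (q s a * Real.log (∑ b, pstar s b))
              + Real.log Z * (β * q s a)) :=
            Finset.sum_congr rfl fun s _ => Finset.sum_congr rfl fun a _ => by
              rw [hAdvId s a]; ring
        _ = _ := by
            simp only [Finset.sum_add_distrib, ← Finset.mul_sum]
            rw [hq1]; ring
    rw [Ravg, ← htel q hqs, hA]
    simp only [Finset.sum_sub_distrib]
    ring
  have hRp : Ravg r α β pstar = β * Real.log Z := by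
    rw [hval pstar (fun s a => (hupos s a).le) hsum1 hstat]
    simp
  refine ⟨⟨fun s a => (hupos s a).le, hsum1, hstat⟩, ?_, hRp⟩
  rintro q ⟨hq0, hq1, hqs⟩
  rw [hRp, hval q hq0 hq1 hqs]
  set E1 : ℝ := ∑ s, ∑ a, (q s a * Real.log (q s a) - q s a * Real.log (pstar s a))
    with hE1def
  set E2 : ℝ := ∑ s, ∑ a, (q s a * Real.log (∑ b, q s b)
      - q s a * Real.log (∑ b, pstar s b)) with hE2def
  have hmnn : ∀ s, 0 ≤ ∑ b, q s b := fun s =>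
    Finset.sum_nonneg fun b _ => hq0 s b
  have hMpos : ∀ s, 0 < ∑ b, pstar s b := fun s =>
    Finset.sum_pos (fun b _ => hupos s b) Finset.univ_nonempty
  have hE2eq : E2 = ∑ s, ((∑ b, q s b) * Real.log (∑ b, q s b)
      - (∑ b, q s b) * Real.log (∑ b, pstar s b)) := by
    rw [hE2def]
    exact Finset.sum_congr rfl fun s _ => by
      rw [Finset.sum_sub_distrib, ← Finset.sum_mul, ← Finset.sum_mul]
  have hE2nn : 0 ≤ E2 := by
    rw [hE2eq]
    have h1 : (∑ s, ((∑ b, q s b) - (∑ b, pstar s b)))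
        ≤ ∑ s, ((∑ b, q s b) * Real.log (∑ b, q s b)
          - (∑ b, q s b) * Real.log (∑ b, pstar s b)) :=
      Finset.sum_le_sum fun s _ => klAux (hmnn s) (hMpos s)
    have h2 : (∑ s, ((∑ b, q s b) - (∑ b, pstar s b))) = 0 := by
      rw [Finset.sum_sub_distrib, hq1, hsum1, sub_self]
    linarith
  have hE12 : E2 ≤ E1 := by
    rw [hE1def, hE2eq]
    refine Finset.sum_le_sum fun s _ => ?_
    rcases eq_or_lt_of_le (hmnn s) with hm | hm
    · have hz : ∀ a, q s a = 0 := by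
        intro a
        have := (Finset.sum_eq_zero_iff_of_nonneg
          (fun b (_ : b ∈ Finset.univ) => hq0 s b)).mp hm.symm
        exact this a (Finset.mem_univ a)
      simp [hz, ← hm]
    · have inner : ∀ a, q s a - pstar s a * (∑ b, q s b) / (∑ b, pstar s b)
          ≤ q s a * Real.log (q s a) - q s a * Real.log (pstar s a)
            - (q s a * Real.log (∑ b, q s b) - q s a * Real.log (∑ b, pstar s b)) := by
        intro a
        have hy : 0 < pstar s a * (∑ b, q s b) / (∑ b, pstar s b) :=
          div_pos (mul_pos (hupos s a) hm) (hMpos s)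
        have hk := klAux (hq0 s a) hy
        have hlog : Real.log (pstar s a * (∑ b, q s b) / (∑ b, pstar s b))
            = Real.log (pstar s a) + Real.log (∑ b, q s b)
              - Real.log (∑ b, pstar s b) := by
          rw [Real.log_div (mul_pos (hupos s a) hm).ne' (hMpos s).ne',
            Real.log_mul (hupos s a).ne' hm.ne']
        rw [hlog] at hk
        nlinarith [hk]
      have hsumineq := Finset.sum_le_sum fun a (_ : a ∈ Finset.univ) => inner a
      have hls : (∑ a, (q s a - pstar s a * (∑ b, q s b) / (∑ b, pstar s b))) = 0 := by
        rw [Finset.sum_sub_distrib]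
        have hthis : (∑ a, pstar s a * (∑ b, q s b) / (∑ b, pstar s b))
            = (∑ b, pstar s b) * (∑ b, q s b) / (∑ b, pstar s b) := by
          rw [← Finset.sum_div, ← Finset.sum_mul]
        rw [hthis, mul_comm (∑ b, pstar s b) (∑ b, q s b), mul_div_assoc,
          div_self (hMpos s).ne', mul_one, sub_self]
      have hrs : (∑ a, (q s a * Real.log (q s a) - q s a * Real.log (pstar s a)
            - (q s a * Real.log (∑ b, q s b) - q s a * Real.log (∑ b, pstar s b))))
          = (∑ a, (q s a * Real.log (q s a) - q s a * Real.log (pstar s a)))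
            - ((∑ b, q s b) * Real.log (∑ b, q s b)
              - (∑ b, q s b) * Real.log (∑ b, pstar s b)) := by
        rw [Finset.sum_sub_distrib]
        congr 1
        rw [Finset.sum_sub_distrib, ← Finset.sum_mul, ← Finset.sum_mul]
      rw [hls, hrs] at hsumineq
      linarith
  nlinarith [mul_nonneg hα.le (sub_nonneg.mpr hE12), mul_nonneg hβ.le hE2nn]
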